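/- Let S be a commutative ring of characteristic zero in which every nonzero integer is invertible (e.g., a ℚ-algebra). For every finite set X, the weak total orders on X form a basis of the quotient of the free S-module on partial orders of X by the submodule Z(X) = {u : ⟨u,s⟩ = 0 for all partial orders s}, where ⟨·,·⟩ is the bilinear compatibility pairing. -/

import Mathlib

/-- Two relations are compatible when the transitive closure of their union is
antisymmetric (i.e. the union is acyclic). -/
def Compatible {X : Type*} (r s : X → X → Prop) : Prop :=
  ∀ a b : X, Relation.TransGen (fun u v => r u v ∨ s u v) a b →
    Relation.TransGen (fun u v => r u v ∨ s u v) b a → a = b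

open Classical in
/-- The compatibility pairing with values in a commutative semiring. -/
noncomputable def bracket {X : Type*} (S : Type*) [CommSemiring S]
    (r s : X → X → Prop) : S :=
  if Compatible r s then 1 else 0

/-- A weak total order: a partial order in which `x < y` implies `x < z` or `z < y`. -/
def IsWeakTotalOrder (X : Type*) (r : X → X → Prop) : Prop :=
  IsPartialOrder X r ∧
    ∀ x y z : X, (r x y ∧ x ≠ y) → (r x z ∧ x ≠ z) ∨ (r z y ∧ z ≠ y)

namespace PF

attribute [local instance] Classical.propDecidable

variable {X : Type*}

/-- strict part of a boolean relation -/
def BStrict (t : X → X → Bool) (a b : X) : Prop := t a b = true ∧ a ≠ b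

/-- "level of a ≤ level of b" for a weak order -/
def Tle (t : X → X → Bool) (a b : X) : Prop := ¬ BStrict t b a

def SameLev (t : X → X → Bool) (a b : X) : Prop := Tle t a b ∧ Tle t b a

structure IsWeakB (t : X → X → Bool) : Prop where
  rfl' : ∀ a, t a a = true
  antisymm : ∀ a b, t a b = true → t b a = true → a = b
  trans : ∀ a b c, t a b = true → t b c = true → t a c = true
  wk : ∀ a b z, BStrict t a b → BStrict t a z ∨ BStrict t z b

/-- a preorder as bare relation -/
structure IsPre (ρ : X → X → Prop) : Prop where
  rfl' : ∀ a, ρ a a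
  trans : ∀ a b c, ρ a b → ρ b c → ρ a c

/-- `t` extends the preorder `ρ`: strict pairs become strict, equivalent pairs same level -/
def CExt (ρ : X → X → Prop) (t : X → X → Bool) : Prop :=
  (∀ a b, ρ a b → ¬ ρ b a → BStrict t a b) ∧
  (∀ a b, ρ a b → ρ b a → SameLev t a b)

section API
variable {t : X → X → Bool} (hw : IsWeakB t)

theorem tle_refl (a : X) : Tle t a a := fun h => h.2 rfl

include hw

theorem bstrict_asymm {a b : X} (h : BStrict t a b) : ¬ BStrict t b a :=
  fun h' => h.2 (hw.antisymm a b h.1 h'.1)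

theorem tle_of_bstrict {a b : X} (h : BStrict t a b) : Tle t a b :=
  bstrict_asymm hw h

theorem tle_total (a b : X) : Tle t a b ∨ Tle t b a := by
  by_cases h : BStrict t a b
  · exact Or.inl (tle_of_bstrict hw h)
  · exact Or.inr h

theorem tle_trans {a b c : X} (h1 : Tle t a b) (h2 : Tle t b c) : Tle t a c := by
  intro h
  rcases hw.wk c a b h with h' | h'
  · exact h2 h'
  · exact h1 h'

theorem bstrict_of_not_tle {a b : X} (h : ¬ Tle t b a) : BStrict t a b := not_not.1 h

theorem tle_bstrict_trans {a b c : X} (h1 : Tle t a b) (h2 : BStrict t b c) : BStrict t a c := by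
  apply bstrict_of_not_tle hw
  intro h
  exact (tle_trans hw h h1) h2

theorem bstrict_tle_trans {a b c : X} (h1 : BStrict t a b) (h2 : Tle t b c) : BStrict t a c := by
  apply bstrict_of_not_tle hw
  intro h
  exact (tle_trans hw h2 h) h1

theorem cext_tle {ρ : X → X → Prop} (hc : CExt ρ t) {a b : X} (h : ρ a b) : Tle t a b := by
  by_cases h' : ρ b a
  · exact (hc.2 a b h h').1
  · exact tle_of_bstrict hw (hc.1 a b h h')

end API

theorem samelev_refl {t : X → X → Bool} (a : X) : SameLev t a a := ⟨tle_refl a, tle_refl a⟩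


def addR (ρ : X → X → Prop) (x y : X) : X → X → Prop :=
  fun a b => ρ a b ∨ (ρ a x ∧ ρ y b)

def glueR (ρ : X → X → Prop) (x y : X) : X → X → Prop :=
  fun a b => ρ a b ∨ (ρ a x ∧ ρ y b) ∨ (ρ a y ∧ ρ x b)

section step
variable {ρ : X → X → Prop} {x y : X} (hρ : IsPre ρ) (hx : ¬ ρ x y) (hy : ¬ ρ y x)
variable {t : X → X → Bool} (hw : IsWeakB t)
include hρ hx hy

theorem addR_pre : IsPre (addR ρ x y) := by
  constructor
  · intro a; exact Or.inl (hρ.rfl' a)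
  · rintro a b c (h | ⟨h1, h2⟩) (h' | ⟨h1', h2'⟩)
    · exact Or.inl (hρ.trans _ _ _ h h')
    · exact Or.inr ⟨hρ.trans _ _ _ h h1', h2'⟩
    · exact Or.inr ⟨h1, hρ.trans _ _ _ h2 h'⟩
    · exact absurd (hρ.trans _ _ _ h2 h1') hy

theorem glueR_pre : IsPre (glueR ρ x y) := by
  constructor
  · intro a; exact Or.inl (hρ.rfl' a)
  · rintro a b c (h | ⟨h1, h2⟩ | ⟨h1, h2⟩) (h' | ⟨h1', h2'⟩ | ⟨h1', h2'⟩)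
    · exact Or.inl (hρ.trans _ _ _ h h')
    · exact Or.inr (Or.inl ⟨hρ.trans _ _ _ h h1', h2'⟩)
    · exact Or.inr (Or.inr ⟨hρ.trans _ _ _ h h1', h2'⟩)
    · exact Or.inr (Or.inl ⟨h1, hρ.trans _ _ _ h2 h'⟩)
    · exact absurd (hρ.trans _ _ _ h2 h1') hy
    · exact Or.inl (hρ.trans _ _ _ h1 h2')
    · exact Or.inr (Or.inr ⟨h1, hρ.trans _ _ _ h2 h'⟩)
    · exact Or.inl (hρ.trans _ _ _ h1 h2')
    · exact absurd (hρ.trans _ _ _ h2 h1') hx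

include hw in
theorem cext_addR_iff :
    CExt (addR ρ x y) t ↔ CExt ρ t ∧ BStrict t x y := by
  constructor
  · intro h
    refine ⟨⟨?_, ?_⟩, ?_⟩
    · intro a b hab hba
      refine h.1 a b (Or.inl hab) ?_
      rintro (h' | ⟨h1, h2⟩)
      · exact hba h'
      · exact hy (hρ.trans _ _ _ (hρ.trans _ _ _ h2 hab) h1)
    · intro a b hab hba
      exact h.2 a b (Or.inl hab) (Or.inl hba)
    · refine h.1 x y (Or.inr ⟨hρ.rfl' x, hρ.rfl' y⟩) ?_
      rintro (h' | ⟨h1, h2⟩)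
      · exact hy h'
      · exact hy h1
  · rintro ⟨hc, hst⟩
    constructor
    · rintro a b (hab | ⟨h1, h2⟩) hba
      · exact hc.1 a b hab (fun h' => hba (Or.inl h'))
      · exact bstrict_tle_trans hw (tle_bstrict_trans hw (cext_tle hw hc h1) hst)
          (cext_tle hw hc h2)
    · rintro a b (hab | ⟨h1, h2⟩) (hba | ⟨h1', h2'⟩)
      · exact hc.2 a b hab hba
      · exact absurd (hρ.trans _ _ _ (hρ.trans _ _ _ h2' hab) h1') hy
      · exact absurd (hρ.trans _ _ _ (hρ.trans _ _ _ h2 hba) h1) hy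
      · exact absurd (hρ.trans _ _ _ h2 h1') hy

include hw in
theorem glue_tle (hc : CExt ρ t) (hlev : SameLev t x y) :
    ∀ a b, glueR ρ x y a b → Tle t a b := by
  rintro a b (hab | ⟨h1, h2⟩ | ⟨h1, h2⟩)
  · exact cext_tle hw hc hab
  · exact tle_trans hw (tle_trans hw (cext_tle hw hc h1) hlev.1) (cext_tle hw hc h2)
  · exact tle_trans hw (tle_trans hw (cext_tle hw hc h1) hlev.2) (cext_tle hw hc h2)

include hw in
theorem cext_glueR_iff :
    CExt (glueR ρ x y) t ↔ CExt ρ t ∧ SameLev t x y := by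
  constructor
  · intro h
    refine ⟨⟨?_, ?_⟩, ?_⟩
    · intro a b hab hba
      refine h.1 a b (Or.inl hab) ?_
      rintro (h' | ⟨h1, h2⟩ | ⟨h1, h2⟩)
      · exact hba h'
      · exact hy (hρ.trans _ _ _ (hρ.trans _ _ _ h2 hab) h1)
      · exact hx (hρ.trans _ _ _ (hρ.trans _ _ _ h2 hab) h1)
    · intro a b hab hba
      exact h.2 a b (Or.inl hab) (Or.inl hba)
    · exact h.2 x y (Or.inr (Or.inl ⟨hρ.rfl' x, hρ.rfl' y⟩))
        (Or.inr (Or.inr ⟨hρ.rfl' y, hρ.rfl' x⟩))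
  · rintro ⟨hc, hlev⟩
    constructor
    · rintro a b hab hba
      rcases hab with hab | ⟨h1, h2⟩ | ⟨h1, h2⟩
      · exact hc.1 a b hab (fun h' => hba (Or.inl h'))
      · by_cases hxa : ρ x a
        · by_cases hby : ρ b y
          · exact absurd (Or.inr (Or.inr ⟨hby, hxa⟩)) hba
          · exact tle_bstrict_trans hw (tle_trans hw (cext_tle hw hc h1) hlev.1)
              (hc.1 y b h2 hby)
        · exact bstrict_tle_trans hw (bstrict_tle_trans hw (hc.1 a x h1 hxa) hlev.1)
            (cext_tle hw hc h2)
      · by_cases hya : ρ y a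
        · by_cases hbx : ρ b x
          · exact absurd (Or.inr (Or.inl ⟨hbx, hya⟩)) hba
          · exact tle_bstrict_trans hw (tle_trans hw (cext_tle hw hc h1) hlev.2)
              (hc.1 x b h2 hbx)
        · exact bstrict_tle_trans hw (bstrict_tle_trans hw (hc.1 a y h1 hya) hlev.2)
            (cext_tle hw hc h2)
    · intro a b hab hba
      exact ⟨glue_tle hρ hx hy hw hc hlev a b hab, glue_tle hρ hx hy hw hc hlev b a hba⟩

theorem equiv_addR_iff (a b : X) :
    (addR ρ x y a b ∧ addR ρ x y b a) ↔ (ρ a b ∧ ρ b a) := by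
  constructor
  · rintro ⟨hab | ⟨h1, h2⟩, hba | ⟨h1', h2'⟩⟩
    · exact ⟨hab, hba⟩
    · exact absurd (hρ.trans _ _ _ (hρ.trans _ _ _ h2' hab) h1') hy
    · exact absurd (hρ.trans _ _ _ (hρ.trans _ _ _ h2 hba) h1) hy
    · exact absurd (hρ.trans _ _ _ h2 h1') hy
  · rintro ⟨h, h'⟩; exact ⟨Or.inl h, Or.inl h'⟩

theorem equiv_glueR_iff (a b : X) :
    (glueR ρ x y a b ∧ glueR ρ x y b a) ↔
      ((ρ a b ∧ ρ b a) ∨ ((ρ a x ∧ ρ x a) ∧ (ρ b y ∧ ρ y b)) ∨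
        ((ρ a y ∧ ρ y a) ∧ (ρ b x ∧ ρ x b))) := by
  constructor
  · rintro ⟨hab | ⟨h1, h2⟩ | ⟨h1, h2⟩, hba | ⟨h1', h2'⟩ | ⟨h1', h2'⟩⟩
    · exact Or.inl ⟨hab, hba⟩
    · exact absurd (hρ.trans _ _ _ (hρ.trans _ _ _ h2' hab) h1') hy
    · exact absurd (hρ.trans _ _ _ (hρ.trans _ _ _ h2' hab) h1') hx
    · exact absurd (hρ.trans _ _ _ (hρ.trans _ _ _ h2 hba) h1) hy
    · exact absurd (hρ.trans _ _ _ h2' h1) hy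
    · exact Or.inr (Or.inl ⟨⟨h1, h2'⟩, ⟨h1', h2⟩⟩)
    · exact absurd (hρ.trans _ _ _ (hρ.trans _ _ _ h2 hba) h1) hx
    · exact Or.inr (Or.inr ⟨⟨h1, h2'⟩, ⟨h1', h2⟩⟩)
    · exact absurd (hρ.trans _ _ _ h2 h1') hx
  · rintro (⟨h, h'⟩ | ⟨⟨hax, hxa⟩, ⟨hby, hyb⟩⟩ | ⟨⟨hay, hya⟩, ⟨hbx, hxb⟩⟩)
    · exact ⟨Or.inl h, Or.inl h'⟩
    · exact ⟨Or.inr (Or.inl ⟨hax, hyb⟩), Or.inr (Or.inr ⟨hby, hxa⟩)⟩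
    · exact ⟨Or.inr (Or.inr ⟨hay, hxb⟩), Or.inr (Or.inl ⟨hbx, hya⟩)⟩

end step


section fin
variable [Fintype X] [DecidableEq X]
open Finset

noncomputable def kP (ρ : X → X → Prop) : ℕ :=
  ((univ : Finset X).image fun a => (univ : Finset X).filter fun b => ρ a b ∧ ρ b a).card

noncomputable def kB (t : X → X → Bool) : ℕ :=
  ((univ : Finset X).image fun a => (univ : Finset X).filter fun b => SameLev t a b).card

noncomputable def eps (S : Type*) [CommRing S] (t : X → X → Bool) : S :=
  (-1) ^ (Fintype.card X + kB t)

noncomputable def WS : Finset (X → X → Bool) := (univ : Finset (X → X → Bool)).filter IsWeakB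

noncomputable def iN (ρ : X → X → Prop) : ℕ :=
  ((univ : Finset (X × X)).filter fun p => ¬ ρ p.1 p.2 ∧ ¬ ρ p.2 p.1).card

section klem
variable {ρ : X → X → Prop} {x y : X} (hρ : IsPre ρ) (hx : ¬ ρ x y) (hy : ¬ ρ y x)
include hρ hx hy

theorem kP_addR : kP (addR ρ x y) = kP ρ := by
  unfold kP
  congr 1
  apply image_congr
  intro a _
  ext b
  simp only [mem_filter, mem_univ, true_and]
  exact equiv_addR_iff hρ hx hy a b

theorem kP_glueR : kP ρ = kP (glueR ρ x y) + 1 := by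
  classical
  set E : X → X → Prop := fun a b => ρ a b ∧ ρ b a with hE
  set C : X → Finset X := fun a => (univ : Finset X).filter fun b => ρ a b ∧ ρ b a with hC
  set C3 : X → Finset X := fun a =>
    (univ : Finset X).filter fun b => glueR ρ x y a b ∧ glueR ρ x y b a with hC3
  have memC : ∀ a b, b ∈ C a ↔ (ρ a b ∧ ρ b a) := by intro a b; simp [hC]
  have hCeq : ∀ a b, ρ a b → ρ b a → C a = C b := by
    intro a b h1 h2; ext c
    simp only [memC]
    constructor
    · rintro ⟨u, v⟩; exact ⟨hρ.trans _ _ _ h2 u, hρ.trans _ _ _ v h1⟩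
    · rintro ⟨u, v⟩; exact ⟨hρ.trans _ _ _ h1 u, hρ.trans _ _ _ v h2⟩
  have selfC : ∀ a, a ∈ C a := fun a => (memC a a).2 ⟨hρ.rfl' a, hρ.rfl' a⟩
  have hxy' : C x ≠ C y := by
    intro h
    exact hx ((memC x y).1 (h ▸ selfC y)).1
  have memC3 : ∀ a b, b ∈ C3 a ↔ ((ρ a b ∧ ρ b a) ∨ ((ρ a x ∧ ρ x a) ∧ (ρ b y ∧ ρ y b)) ∨
      ((ρ a y ∧ ρ y a) ∧ (ρ b x ∧ ρ x b))) := by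
    intro a b
    simp only [hC3, mem_filter, mem_univ, true_and]
    exact equiv_glueR_iff hρ hx hy a b
  have hAx : ∀ a, ρ a x → ρ x a → C3 a = C x ∪ C y := by
    intro a hax hxa
    ext b
    rw [memC3, mem_union, memC, memC]
    constructor
    · rintro (⟨u, v⟩ | ⟨⟨u, v⟩, ⟨p, q⟩⟩ | ⟨⟨u, v⟩, p, q⟩)
      · exact Or.inl ⟨hρ.trans _ _ _ hxa u, hρ.trans _ _ _ v hax⟩
      · exact Or.inr ⟨q, p⟩
      · exact absurd (hρ.trans _ _ _ hxa u) hx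
    · rintro (⟨u, v⟩ | ⟨u, v⟩)
      · exact Or.inl ⟨hρ.trans _ _ _ hax u, hρ.trans _ _ _ v hxa⟩
      · exact Or.inr (Or.inl ⟨⟨hax, hxa⟩, ⟨v, u⟩⟩)
  have hAy : ∀ a, ρ a y → ρ y a → C3 a = C x ∪ C y := by
    intro a hay hya
    ext b
    rw [memC3, mem_union, memC, memC]
    constructor
    · rintro (⟨u, v⟩ | ⟨⟨u, v⟩, p, q⟩ | ⟨⟨u, v⟩, ⟨p, q⟩⟩)
      · exact Or.inr ⟨hρ.trans _ _ _ hya u, hρ.trans _ _ _ v hay⟩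
      · exact absurd (hρ.trans _ _ _ hya u) hy
      · exact Or.inl ⟨q, p⟩
    · rintro (⟨u, v⟩ | ⟨u, v⟩)
      · exact Or.inr (Or.inr ⟨⟨hay, hya⟩, ⟨v, u⟩⟩)
      · exact Or.inl ⟨hρ.trans _ _ _ hay u, hρ.trans _ _ _ v hya⟩
  have hD : ∀ a, ¬ (ρ a x ∧ ρ x a) → ¬ (ρ a y ∧ ρ y a) → C3 a = C a := by
    intro a h1 h2
    ext b
    rw [memC3, memC]
    constructor
    · rintro (⟨u, v⟩ | ⟨⟨u, v⟩, _⟩ | ⟨⟨u, v⟩, _⟩)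
      · exact ⟨u, v⟩
      · exact absurd ⟨u, v⟩ h1
      · exact absurd ⟨u, v⟩ h2
    · exact fun h => Or.inl h
  have himg : ((univ : Finset X).image C3)
      = insert (C x ∪ C y) ((((univ : Finset X).image C).erase (C x)).erase (C y)) := by
    ext s
    simp only [mem_image, mem_insert, mem_erase, mem_univ, true_and]
    constructor
    · rintro ⟨a, rfl⟩
      by_cases h1 : ρ a x ∧ ρ x a
      · exact Or.inl (hAx a h1.1 h1.2)
      by_cases h2 : ρ a y ∧ ρ y a
      · exact Or.inl (hAy a h2.1 h2.2)
      · refine Or.inr ⟨?_, ?_, ⟨a, (hD a h1 h2).symm⟩⟩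
        · rw [hD a h1 h2]
          intro hcon
          exact h2 (And.symm ((memC y a).1 (hcon ▸ selfC a)))
        · rw [hD a h1 h2]
          intro hcon
          exact h1 (And.symm ((memC x a).1 (hcon ▸ selfC a)))
    · rintro (rfl | ⟨hne2, hne1, a, rfl⟩)
      · exact ⟨x, hAx x (hρ.rfl' x) (hρ.rfl' x)⟩
      · refine ⟨a, ?_⟩
        apply hD a
        · intro h1
          exact hne1 (hCeq a x h1.1 h1.2)
        · intro h2
          exact hne2 (hCeq a y h2.1 h2.2)
  have hUnotin : (C x ∪ C y) ∉ (((univ : Finset X).image C).erase (C x)).erase (C y) := by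
    intro h
    have h' := (mem_erase.1 (mem_erase.1 h).2)
    obtain ⟨a, ha⟩ : ∃ a, C a = C x ∪ C y := by
      have := h'.2
      simp only [mem_image, mem_univ, true_and] at this
      exact this
    have hax : a ∈ C x ∪ C y := ha ▸ selfC a
    rcases mem_union.1 hax with hm | hm
    · obtain ⟨u, v⟩ := (memC x a).1 hm
      have : C x = C x ∪ C y := (hCeq a x v u).symm.trans ha
      have : y ∈ C x := by rw [this]; exact mem_union.2 (Or.inr (selfC y))
      exact hx ((memC x y).1 this).1
    · obtain ⟨u, v⟩ := (memC y a).1 hm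
      have : C y = C x ∪ C y := (hCeq a y v u).symm.trans ha
      have : x ∈ C y := by rw [this]; exact mem_union.2 (Or.inl (selfC x))
      exact hy ((memC y x).1 this).1
  have hCx_mem : C x ∈ (univ : Finset X).image C := mem_image_of_mem _ (mem_univ x)
  have hCy_mem : C y ∈ ((univ : Finset X).image C).erase (C x) :=
    mem_erase.2 ⟨Ne.symm hxy', mem_image_of_mem _ (mem_univ y)⟩
  have hk3 : kP (glueR ρ x y) = ((univ : Finset X).image C3).card := rfl
  have hk : kP ρ = ((univ : Finset X).image C).card := rfl
  have h2le : 2 ≤ ((univ : Finset X).image C).card := by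
    have : ({C x, C y} : Finset (Finset X)) ⊆ (univ : Finset X).image C := by
      intro s hs
      rcases Finset.mem_insert.1 hs with rfl | hs
      · exact hCx_mem
      · rw [Finset.mem_singleton.1 hs]; exact mem_image_of_mem _ (mem_univ y)
    calc 2 = ({C x, C y} : Finset (Finset X)).card := (Finset.card_pair hxy').symm
    _ ≤ _ := Finset.card_le_card this
  rw [hk3, hk, himg, Finset.card_insert_of_notMem hUnotin,
    Finset.card_erase_of_mem hCy_mem, Finset.card_erase_of_mem hCx_mem]
  omega

theorem iN_addR_lt : iN (addR ρ x y) < iN ρ := by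
  apply Finset.card_lt_card
  rw [Finset.ssubset_iff_of_subset]
  · refine ⟨(x, y), ?_, ?_⟩
    · simp only [mem_filter, mem_univ, true_and]
      exact ⟨hx, hy⟩
    · simp only [mem_filter, mem_univ, true_and, not_and, not_not]
      intro hcon
      exact absurd (Or.inr ⟨hρ.rfl' x, hρ.rfl' y⟩) hcon
  · apply Finset.monotone_filter_right
    rintro p _ ⟨h1, h2⟩
    exact ⟨fun h => h1 (Or.inl h), fun h => h2 (Or.inl h)⟩

theorem iN_glueR_lt : iN (glueR ρ x y) < iN ρ := by
  apply Finset.card_lt_card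
  rw [Finset.ssubset_iff_of_subset]
  · refine ⟨(x, y), ?_, ?_⟩
    · simp only [mem_filter, mem_univ, true_and]
      exact ⟨hx, hy⟩
    · simp only [mem_filter, mem_univ, true_and, not_and, not_not]
      intro hcon
      exact absurd (Or.inr (Or.inl ⟨hρ.rfl' x, hρ.rfl' y⟩)) hcon
  · apply Finset.monotone_filter_right
    rintro p _ ⟨h1, h2⟩
    exact ⟨fun h => h1 (Or.inl h), fun h => h2 (Or.inl h)⟩

end klem

/-- the canonical weak order attached to a total preorder -/
noncomputable def wB (ρ : X → X → Prop) : X → X → Bool :=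
  fun a b => decide (a = b ∨ (ρ a b ∧ ¬ ρ b a))

section base
variable {ρ : X → X → Prop} (hρ : IsPre ρ) (htot : ∀ a b : X, ρ a b ∨ ρ b a)

theorem wB_iff (a b : X) : wB ρ a b = true ↔ (a = b ∨ (ρ a b ∧ ¬ ρ b a)) :=
  decide_eq_true_iff

include hρ htot

theorem wB_weak : IsWeakB (wB ρ) := by
  constructor
  · intro a; exact (wB_iff a a).2 (Or.inl rfl)
  · intro a b h1 h2
    rcases (wB_iff a b).1 h1 with h | ⟨h3, h4⟩
    · exact h
    rcases (wB_iff b a).1 h2 with h | ⟨h5, h6⟩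
    · exact h.symm
    · exact absurd h5 h4
  · intro a b c h1 h2
    rcases (wB_iff a b).1 h1 with rfl | ⟨h3, h4⟩
    · exact h2
    rcases (wB_iff b c).1 h2 with rfl | ⟨h5, h6⟩
    · exact h1
    refine (wB_iff a c).2 (Or.inr ⟨hρ.trans _ _ _ h3 h5, fun hca => ?_⟩)
    exact h4 (hρ.trans _ _ _ h5 hca)
  · intro a b z ⟨h1, hne⟩
    rcases (wB_iff a b).1 h1 with h | ⟨h3, h4⟩
    · exact absurd h hne
    by_cases h5 : ρ z b ∧ ¬ ρ b z
    · refine Or.inr ⟨(wB_iff z b).2 (Or.inr h5), fun hzb => ?_⟩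
      exact h5.2 (hzb ▸ hρ.rfl' b)
    · rcases not_and_or.1 h5 with h6 | h6
      · rcases htot z b with h7 | h7
        · exact absurd h7 h6
        · -- ρ b z
          have haz : ρ a z := hρ.trans _ _ _ h3 h7
          have hza : ¬ ρ z a := fun hza => h4 (hρ.trans _ _ _ h7 hza)
          refine Or.inl ⟨(wB_iff a z).2 (Or.inr ⟨haz, hza⟩), fun h => ?_⟩
          exact hza (h ▸ hρ.rfl' a)
      · have h7 : ρ b z := not_not.1 h6
        have haz : ρ a z := hρ.trans _ _ _ h3 h7
        have hza : ¬ ρ z a := fun hza => h4 (hρ.trans _ _ _ h7 hza)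
        refine Or.inl ⟨(wB_iff a z).2 (Or.inr ⟨haz, hza⟩), fun h => ?_⟩
        exact hza (h ▸ hρ.rfl' a)
    
theorem wB_cext : CExt ρ (wB ρ) := by
  constructor
  · intro a b h1 h2
    refine ⟨(wB_iff a b).2 (Or.inr ⟨h1, h2⟩), fun h => ?_⟩
    exact h2 (h ▸ hρ.rfl' a)
  · intro a b h1 h2
    constructor
    · rintro ⟨h3, h4⟩
      rcases (wB_iff b a).1 h3 with h | ⟨h5, h6⟩
      · exact h4 h
      · exact h6 h1
    · rintro ⟨h3, h4⟩
      rcases (wB_iff a b).1 h3 with h | ⟨h5, h6⟩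
      · exact h4 h
      · exact h6 h2

theorem wB_unique {t : X → X → Bool} (hw : IsWeakB t) (hc : CExt ρ t) : t = wB ρ := by
  funext a b
  have hiff : t a b = true ↔ (a = b ∨ (ρ a b ∧ ¬ ρ b a)) := by
    constructor
    · intro h
      by_cases hne : a = b
      · exact Or.inl hne
      by_cases hab : ρ a b
      · by_cases hba : ρ b a
        · exact absurd ⟨h, hne⟩ (hc.2 a b hab hba).2
        · exact Or.inr ⟨hab, hba⟩
      · rcases htot a b with h' | h'
        · exact absurd h' hab
        · have := hc.1 b a h' hab
          exact absurd (hw.antisymm a b h this.1) hne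
    · rintro (rfl | ⟨h1, h2⟩)
      · exact hw.rfl' a
      · exact (hc.1 a b h1 h2).1
  rw [Bool.eq_iff_iff, hiff, wB_iff]

omit htot in
theorem wB_samelev_iff (a b : X) (htot : ∀ a b : X, ρ a b ∨ ρ b a) :
    SameLev (wB ρ) a b ↔ (ρ a b ∧ ρ b a) := by
  constructor
  · rintro ⟨h1, h2⟩
    by_cases hne : a = b
    · subst hne; exact ⟨hρ.rfl' a, hρ.rfl' a⟩
    constructor
    · by_contra hab
      rcases htot a b with h' | h'
      · exact absurd h' hab
      · exact h1 ⟨(wB_iff b a).2 (Or.inr ⟨h', hab⟩), fun h => hne h.symm⟩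
    · by_contra hba
      rcases htot b a with h' | h'
      · exact absurd h' hba
      · exact h2 ⟨(wB_iff a b).2 (Or.inr ⟨h', hba⟩), hne⟩
  · intro h
    exact (wB_cext hρ htot).2 a b h.1 h.2

end base

section corethm
variable [Fintype X] [DecidableEq X]
open Finset

theorem kB_wB {ρ : X → X → Prop} (hρ : IsPre ρ) (htot : ∀ a b : X, ρ a b ∨ ρ b a) :
    kB (wB ρ) = kP ρ := by
  unfold kB kP
  congr 1
  apply image_congr
  intro a _
  ext b
  simp only [mem_filter, mem_univ, true_and]
  exact wB_samelev_iff hρ a b htot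

theorem core (S : Type*) [CommRing S] :
    ∀ (m : ℕ) (ρ : X → X → Prop), IsPre ρ → iN ρ = m →
      ∑ t ∈ WS.filter (fun t => CExt ρ t), eps S t
        = (-1 : S) ^ (Fintype.card X + kP ρ) := by
  intro m
  induction m using Nat.strong_induction_on with
  | _ m IH =>
    intro ρ hρ hm
    by_cases htot : ∀ a b : X, ρ a b ∨ ρ b a
    · have hset : WS.filter (fun t => CExt ρ t) = {wB ρ} := by
        apply Finset.eq_singleton_iff_unique_mem.2
        constructor
        · exact Finset.mem_filter.2 ⟨Finset.mem_filter.2 ⟨mem_univ _, wB_weak hρ htot⟩,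
            wB_cext hρ htot⟩
        · intro t ht
          have h1 := Finset.mem_filter.1 ht
          have h2 := Finset.mem_filter.1 h1.1
          exact wB_unique hρ htot h2.2 h1.2
      rw [hset, Finset.sum_singleton]
      unfold eps
      rw [kB_wB hρ htot]
    · push_neg at htot
      obtain ⟨x, y, hx, hy⟩ := htot
      have hA := IH _ (by rw [← hm]; exact iN_addR_lt hρ hx hy) (addR ρ x y)
        (addR_pre hρ hx hy) rfl
      have hB := IH _ (by rw [← hm]; exact iN_addR_lt hρ hy hx) (addR ρ y x)
        (addR_pre hρ hy hx) rfl
      have hC := IH _ (by rw [← hm]; exact iN_glueR_lt hρ hx hy) (glueR ρ x y)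
        (glueR_pre hρ hx hy) rfl
      have e1 : (WS.filter (fun t => CExt ρ t)).filter (fun t => BStrict t x y)
          = WS.filter (fun t => CExt (addR ρ x y) t) := by
        ext t
        simp only [WS, Finset.mem_filter, mem_univ, true_and, and_assoc]
        constructor
        · rintro ⟨hw, hc, hs⟩
          exact ⟨hw, (cext_addR_iff hρ hx hy hw).2 ⟨hc, hs⟩⟩
        · rintro ⟨hw, hc⟩
          obtain ⟨hc', hs⟩ := (cext_addR_iff hρ hx hy hw).1 hc
          exact ⟨hw, hc', hs⟩
      have e2 : ((WS.filter (fun t => CExt ρ t)).filter (fun t => ¬ BStrict t x y)).filter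
            (fun t => BStrict t y x)
          = WS.filter (fun t => CExt (addR ρ y x) t) := by
        ext t
        simp only [WS, Finset.mem_filter, mem_univ, true_and, and_assoc]
        constructor
        · rintro ⟨hw, hc, _, hs⟩
          exact ⟨hw, (cext_addR_iff hρ hy hx hw).2 ⟨hc, hs⟩⟩
        · rintro ⟨hw, hc⟩
          obtain ⟨hc', hs⟩ := (cext_addR_iff hρ hy hx hw).1 hc
          exact ⟨hw, hc', bstrict_asymm hw hs, hs⟩
      have e3 : ((WS.filter (fun t => CExt ρ t)).filter (fun t => ¬ BStrict t x y)).filter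
            (fun t => ¬ BStrict t y x)
          = WS.filter (fun t => CExt (glueR ρ x y) t) := by
        ext t
        simp only [WS, Finset.mem_filter, mem_univ, true_and, and_assoc]
        constructor
        · rintro ⟨hw, hc, hs1, hs2⟩
          exact ⟨hw, (cext_glueR_iff hρ hx hy hw).2 ⟨hc, ⟨hs2, hs1⟩⟩⟩
        · rintro ⟨hw, hc⟩
          obtain ⟨hc', hs⟩ := (cext_glueR_iff hρ hx hy hw).1 hc
          exact ⟨hw, hc', hs.2, hs.1⟩
      rw [← Finset.sum_filter_add_sum_filter_not (WS.filter (fun t => CExt ρ t))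
          (fun t => BStrict t x y) (eps S),
        ← Finset.sum_filter_add_sum_filter_not
          ((WS.filter (fun t => CExt ρ t)).filter (fun t => ¬ BStrict t x y))
          (fun t => BStrict t y x) (eps S),
        e1, e2, e3, hA, hB, hC, kP_addR hρ hx hy, kP_addR hρ hy hx, kP_glueR hρ hx hy]
      rw [show Fintype.card X + (kP (glueR ρ x y) + 1) = (Fintype.card X + kP (glueR ρ x y)) + 1
        from rfl, pow_succ]
      ring

end corethm

theorem tg_claim {t : X → X → Bool} (hw : IsWeakB t) {e : X → X → Prop}
    (he : ∀ u v, e u v → u = v ∨ BStrict t u v) {a b : X}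
    (h : Relation.TransGen e a b) : a = b ∨ BStrict t a b := by
  induction h with
  | single h' => exact he _ _ h'
  | tail hind h' ih =>
    rcases ih with rfl | ih
    · exact he _ _ h'
    rcases he _ _ h' with rfl | h''
    · exact Or.inr ih
    · exact Or.inr ⟨hw.trans _ _ _ ih.1 h''.1,
        fun hac => h''.2 (hw.antisymm _ _ h''.1 (hac ▸ ih.1))⟩

theorem compat_of_witness {r s : X → X → Prop} (hr : IsPartialOrder X r)
    (hs : IsPartialOrder X s) {t : X → X → Bool} (hw : IsWeakB t)
    (h1 : CExt r t) (h2 : CExt s t) : Compatible r s := by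
  have he : ∀ u v, (r u v ∨ s u v) → u = v ∨ BStrict t u v := by
    rintro u v (h | h)
    · by_cases huv : u = v
      · exact Or.inl huv
      · exact Or.inr (h1.1 u v h (fun h' => huv (hr.antisymm _ _ h h')))
    · by_cases huv : u = v
      · exact Or.inl huv
      · exact Or.inr (h2.1 u v h (fun h' => huv (hs.antisymm _ _ h h')))
  intro a b hab hba
  rcases tg_claim hw he hab with rfl | h'
  · rfl
  rcases tg_claim hw he hba with rfl | h''
  · rfl
  · exact absurd h'' (bstrict_asymm hw h')

/-- reflexive-transitive closure of the union -/
def clos (r s : X → X → Prop) : X → X → Prop :=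
  fun a b => a = b ∨ Relation.TransGen (fun u v => r u v ∨ s u v) a b

theorem clos_pre (r s : X → X → Prop) : IsPre (clos r s) := by
  constructor
  · exact fun a => Or.inl rfl
  · rintro a b c (rfl | h) (rfl | h')
    · exact Or.inl rfl
    · exact Or.inr h'
    · exact Or.inr h
    · exact Or.inr (h.trans h')

theorem clos_antisymm {r s : X → X → Prop} (hcompat : Compatible r s) :
    ∀ a b, clos r s a b → clos r s b a → a = b := by
  rintro a b (rfl | h) (h'' | h')
  · rfl
  · rfl
  · exact h''.symm
  · exact hcompat a b h h'

theorem cext_clos_iff {r s : X → X → Prop} (hr : IsPartialOrder X r)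
    (hs : IsPartialOrder X s) (hcompat : Compatible r s)
    {t : X → X → Bool} (hw : IsWeakB t) :
    CExt (clos r s) t ↔ (CExt r t ∧ CExt s t) := by
  constructor
  · intro h
    constructor
    · constructor
      · intro a b hab hba
        refine h.1 a b (Or.inr (Relation.TransGen.single (Or.inl hab))) ?_
        rintro (rfl | h')
        · exact hba hab
        · exact hba ((hcompat a b (Relation.TransGen.single (Or.inl hab)) h') ▸ hab)
      · intro a b hab hba
        have := hr.antisymm _ _ hab hba
        subst this
        exact samelev_refl a
    · constructor
      · intro a b hab hba
        refine h.1 a b (Or.inr (Relation.TransGen.single (Or.inr hab))) ?_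
        rintro (rfl | h')
        · exact hba hab
        · exact hba ((hcompat a b (Relation.TransGen.single (Or.inr hab)) h') ▸ hab)
      · intro a b hab hba
        have := hs.antisymm _ _ hab hba
        subst this
        exact samelev_refl a
  · rintro ⟨h1, h2⟩
    have he : ∀ u v, (r u v ∨ s u v) → u = v ∨ BStrict t u v := by
      rintro u v (h | h)
      · by_cases huv : u = v
        · exact Or.inl huv
        · exact Or.inr (h1.1 u v h (fun h' => huv (hr.antisymm _ _ h h')))
      · by_cases huv : u = v
        · exact Or.inl huv
        · exact Or.inr (h2.1 u v h (fun h' => huv (hs.antisymm _ _ h h')))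
    constructor
    · rintro a b (rfl | hab) hba
      · exact absurd (Or.inl rfl) hba
      · rcases tg_claim hw he hab with rfl | h'
        · exact absurd (Or.inl rfl) hba
        · exact h'
    · rintro a b hab hba
      have := clos_antisymm hcompat a b hab hba
      subst this
      exact samelev_refl a

section masterthm
variable [Fintype X] [DecidableEq X]
open Finset

theorem kP_of_antisymm {ρ : X → X → Prop} (hρ : IsPre ρ)
    (h : ∀ a b, ρ a b → ρ b a → a = b) : kP ρ = Fintype.card X := by
  unfold kP
  have hsing : ∀ a : X, ((univ : Finset X).filter fun b => ρ a b ∧ ρ b a) = {a} := by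
    intro a; ext b
    simp only [mem_filter, mem_univ, true_and, Finset.mem_singleton]
    constructor
    · rintro ⟨u, v⟩; exact (h a b u v).symm
    · rintro rfl; exact ⟨hρ.rfl' _, hρ.rfl' _⟩
  calc ((univ : Finset X).image (fun a => (univ : Finset X).filter fun b => ρ a b ∧ ρ b a)).card
      = ((univ : Finset X).image (fun a : X => ({a} : Finset X))).card := by
        congr 1
        apply image_congr
        intro a _
        exact hsing a
    _ = Fintype.card X := by
        rw [Finset.card_image_of_injective _ Finset.singleton_injective]
        exact Finset.card_univ

theorem master (S : Type*) [CommRing S] {r s : X → X → Prop}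
    (hr : IsPartialOrder X r) (hs : IsPartialOrder X s) :
    bracket S r s = ∑ t ∈ WS.filter (fun t => CExt r t ∧ CExt s t), eps S t := by
  by_cases hcompat : Compatible r s
  · have hfe : WS.filter (fun t => CExt r t ∧ CExt s t)
        = WS.filter (fun t => CExt (clos r s) t) := by
      ext t
      simp only [WS, Finset.mem_filter, mem_univ, true_and, and_assoc]
      constructor
      · rintro ⟨hw, hc1, hc2⟩
        exact ⟨hw, (cext_clos_iff hr hs hcompat hw).2 ⟨hc1, hc2⟩⟩
      · rintro ⟨hw, hc⟩
        obtain ⟨hc1, hc2⟩ := (cext_clos_iff hr hs hcompat hw).1 hc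
        exact ⟨hw, hc1, hc2⟩
    rw [bracket, if_pos hcompat, hfe,
      core S (iN (clos r s)) _ (clos_pre r s) rfl,
      kP_of_antisymm (clos_pre r s) (clos_antisymm hcompat)]
    exact (Even.neg_one_pow (⟨Fintype.card X, rfl⟩ : Even (Fintype.card X + Fintype.card X))).symm
  · have hfe : WS.filter (fun t => CExt r t ∧ CExt s t) = ∅ := by
      apply Finset.eq_empty_iff_forall_notMem.2
      intro t ht
      have h1 := Finset.mem_filter.1 ht
      have hw := (Finset.mem_filter.1 h1.1).2
      exact hcompat (compat_of_witness hr hs hw h1.2.1 h1.2.2)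
    rw [bracket, if_neg hcompat, hfe, Finset.sum_empty]

end masterthm

def toRel (t : X → X → Bool) : X → X → Prop := fun a b => t a b = true

theorem toRel_po {t : X → X → Bool} (hw : IsWeakB t) : IsPartialOrder X (toRel t) :=
  { refl := hw.rfl', trans := hw.trans, antisymm := hw.antisymm }

theorem toRel_wto {t : X → X → Bool} (hw : IsWeakB t) : IsWeakTotalOrder X (toRel t) :=
  ⟨toRel_po hw, fun x y z h => hw.wk x y z h⟩

theorem wto_toB {w : X → X → Prop} (h : IsWeakTotalOrder X w) :
    IsWeakB (fun a b => decide (w a b)) := by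
  obtain ⟨hpo, hwk⟩ := h
  constructor
  · intro a; exact decide_eq_true (hpo.refl a)
  · intro a b h1 h2; exact hpo.antisymm _ _ (of_decide_eq_true h1) (of_decide_eq_true h2)
  · intro a b c h1 h2
    exact decide_eq_true (hpo.trans _ _ _ (of_decide_eq_true h1) (of_decide_eq_true h2))
  · intro a b z h1
    rcases hwk a b z ⟨of_decide_eq_true h1.1, h1.2⟩ with ⟨h2, h3⟩ | ⟨h2, h3⟩
    · exact Or.inl ⟨decide_eq_true h2, h3⟩
    · exact Or.inr ⟨decide_eq_true h2, h3⟩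

theorem cext_toRel_self {t : X → X → Bool} (hw : IsWeakB t) : CExt (toRel t) t := by
  constructor
  · intro a b hab hba
    refine ⟨hab, fun he => ?_⟩
    subst he
    exact hba (hw.rfl' a)
  · intro a b hab hba
    have := hw.antisymm _ _ hab hba
    subst this
    exact samelev_refl a

theorem cext_poset_iff {r : X → X → Prop} (hr : IsPartialOrder X r) (t : X → X → Bool) :
    CExt r t ↔ ∀ a b, r a b → a ≠ b → BStrict t a b := by
  constructor
  · intro h a b hab hne
    exact h.1 a b hab (fun h' => hne (hr.antisymm _ _ hab h'))
  · intro h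
    constructor
    · intro a b hab hba
      refine h a b hab (fun he => ?_)
      subst he
      exact hba hab
    · intro a b hab hba
      have := hr.antisymm _ _ hab hba
      subst this
      exact samelev_refl a

theorem eq_of_bstrict_iff {t u : X → X → Bool} (hwt : IsWeakB t) (hwu : IsWeakB u)
    (h : ∀ a b, BStrict t a b ↔ BStrict u a b) : t = u := by
  funext a b
  rw [Bool.eq_iff_iff]
  by_cases hne : a = b
  · subst hne
    simp [hwt.rfl' a, hwu.rfl' a]
  · constructor
    · intro h1; exact ((h a b).1 ⟨h1, hne⟩).1
    · intro h1; exact ((h a b).2 ⟨h1, hne⟩).1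

section invsec
variable [Fintype X] [DecidableEq X]
open Finset

theorem eps_sq (S : Type*) [CommRing S] (t : X → X → Bool) : eps S t * eps S t = 1 := by
  unfold eps
  rw [← pow_add]
  exact Even.neg_one_pow ⟨_, rfl⟩

noncomputable def nsCard (t : X → X → Bool) : ℕ :=
  ((univ : Finset (X × X)).filter fun p => ¬ BStrict t p.1 p.2).card

theorem t_mem_WS {t : X → X → Bool} (hw : IsWeakB t) : t ∈ WS :=
  Finset.mem_filter.2 ⟨mem_univ _, hw⟩

theorem WS_weak {t : X → X → Bool} (ht : t ∈ WS) : IsWeakB t :=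
  (Finset.mem_filter.1 ht).2

theorem nsCard_lt {t u : X → X → Bool} (hwt : IsWeakB t) (hwu : IsWeakB u)
    (h : CExt (toRel t) u) (hne : u ≠ t) : nsCard u < nsCard t := by
  have hst : ∀ a b, BStrict t a b → BStrict u a b := by
    intro a b hab
    exact (cext_poset_iff (toRel_po hwt) u).1 h a b hab.1 hab.2
  apply Finset.card_lt_card
  rw [Finset.ssubset_iff_of_subset]
  · by_contra hno
    push_neg at hno
    apply hne
    apply eq_of_bstrict_iff hwu hwt
    intro a b
    constructor
    · intro h1
      by_contra h2
      have h3 := hno (a, b) (by simp only [mem_filter, mem_univ, true_and]; exact h2)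
      simp only [mem_filter, mem_univ, true_and] at h3
      exact h3 h1
    · exact hst a b
  · apply Finset.monotone_filter_right
    intro p _ hp
    exact fun hb => hp (hst _ _ hb)

theorem st_inv (S : Type*) [CommRing S] :
    ∀ (m : ℕ) (t : X → X → Bool), IsWeakB t → nsCard t = m →
      ∃ coef : (X → X → Bool) → S, ∀ s : X → X → Prop, IsPartialOrder X s →
        (if CExt s t then (1 : S) else 0) = ∑ u ∈ WS, coef u * bracket S (toRel u) s := by
  intro m
  induction m using Nat.strong_induction_on with
  | _ m IH =>
    intro t hwt hm
    set F : Finset (X → X → Bool) := WS.filter (fun u => CExt (toRel t) u ∧ u ≠ t) with hF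
    have hFmem : ∀ u ∈ F, IsWeakB u ∧ CExt (toRel t) u ∧ u ≠ t := by
      intro u hu
      rw [hF, Finset.mem_filter] at hu
      exact ⟨WS_weak hu.1, hu.2⟩
    have hch : ∀ u, ∃ c : (X → X → Bool) → S, u ∈ F → ∀ s : X → X → Prop, IsPartialOrder X s →
        (if CExt s u then (1 : S) else 0) = ∑ v ∈ WS, c v * bracket S (toRel v) s := by
      intro u
      by_cases hu : u ∈ F
      · obtain ⟨hwu, hcu, hneu⟩ := hFmem u hu
        obtain ⟨c, hc⟩ := IH (nsCard u) (hm ▸ nsCard_lt hwt hwu hcu hneu) u hwu rfl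
        exact ⟨c, fun _ => hc⟩
      · exact ⟨fun _ => 0, fun h => absurd h hu⟩
    choose g hg using hch
    refine ⟨fun v => eps S t * (if v = t then 1 else 0)
      - eps S t * ∑ u ∈ F, eps S u * g u v, ?_⟩
    intro s hs
    have htmem : t ∈ WS := t_mem_WS hwt
    have htninF : t ∉ F := by
      rw [hF, Finset.mem_filter]
      rintro ⟨-, -, hne⟩
      exact hne rfl
    have hins : WS.filter (fun u => CExt (toRel t) u) = insert t F := by
      ext u
      rw [hF]
      simp only [Finset.mem_insert, Finset.mem_filter]
      constructor
      · rintro ⟨hWu, hcu⟩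
        by_cases h : u = t
        · exact Or.inl h
        · exact Or.inr ⟨hWu, hcu, h⟩
      · rintro (rfl | ⟨hWu, hcu, -⟩)
        · exact ⟨htmem, cext_toRel_self hwt⟩
        · exact ⟨hWu, hcu⟩
    have hff : (WS.filter (fun u => CExt (toRel t) u)).filter (fun u => CExt s u)
        = WS.filter (fun u => CExt (toRel t) u ∧ CExt s u) := Finset.filter_filter _ _ _
    have hmaster2 : bracket S (toRel t) s
        = (if CExt s t then eps S t else 0) + ∑ u ∈ F, (if CExt s u then eps S u else 0) := by
      rw [master S (toRel_po hwt) hs, ← hff, hins, Finset.sum_filter,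
        Finset.sum_insert htninF]
    have halign : ∑ u ∈ F, (if CExt s u then eps S u else 0)
        = ∑ u ∈ F, eps S u * (if CExt s u then (1 : S) else 0) :=
      Finset.sum_congr rfl (fun u _ => by split_ifs <;> ring)
    have hrhs : ∑ v ∈ WS, (eps S t * (if v = t then 1 else 0)
          - eps S t * ∑ u ∈ F, eps S u * g u v) * bracket S (toRel v) s
        = eps S t * bracket S (toRel t) s
          - eps S t * ∑ u ∈ F, eps S u * (if CExt s u then (1 : S) else 0) := by
      calc ∑ v ∈ WS, (eps S t * (if v = t then 1 else 0)
            - eps S t * ∑ u ∈ F, eps S u * g u v) * bracket S (toRel v) s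
          = (∑ v ∈ WS, eps S t * ((if v = t then 1 else 0) * bracket S (toRel v) s))
            - ∑ v ∈ WS, eps S t * ((∑ u ∈ F, eps S u * g u v) * bracket S (toRel v) s) := by
            rw [← Finset.sum_sub_distrib]
            exact Finset.sum_congr rfl (fun v _ => by ring)
        _ = eps S t * bracket S (toRel t) s
            - eps S t * ∑ u ∈ F, eps S u * (if CExt s u then (1 : S) else 0) := by
            congr 1
            · rw [← Finset.mul_sum]
              congr 1
              calc ∑ v ∈ WS, (if v = t then 1 else 0) * bracket S (toRel v) s
                  = ∑ v ∈ WS, (if v = t then bracket S (toRel v) s else 0) :=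
                    Finset.sum_congr rfl (fun v _ => by split_ifs <;> ring)
                _ = bracket S (toRel t) s := by
                    rw [Finset.sum_ite_eq' WS t (fun v => bracket S (toRel v) s), if_pos htmem]
            · rw [← Finset.mul_sum]
              congr 1
              calc ∑ v ∈ WS, (∑ u ∈ F, eps S u * g u v) * bracket S (toRel v) s
                  = ∑ v ∈ WS, ∑ u ∈ F, eps S u * (g u v * bracket S (toRel v) s) := by
                    refine Finset.sum_congr rfl (fun v _ => ?_)
                    rw [Finset.sum_mul]
                    exact Finset.sum_congr rfl (fun u _ => by ring)
                _ = ∑ u ∈ F, ∑ v ∈ WS, eps S u * (g u v * bracket S (toRel v) s) :=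
                    Finset.sum_comm
                _ = ∑ u ∈ F, eps S u * (if CExt s u then (1 : S) else 0) := by
                    refine Finset.sum_congr rfl (fun u hu => ?_)
                    rw [← Finset.mul_sum, ← hg u hu s hs]
    rw [hrhs, hmaster2, halign]
    split_ifs with h
    · linear_combination -eps_sq S t
    · ring

theorem generation (S : Type*) [CommRing S] {r : X → X → Prop} (hr : IsPartialOrder X r) :
    ∃ coef : (X → X → Bool) → S, ∀ s : X → X → Prop, IsPartialOrder X s →
      bracket S r s = ∑ u ∈ WS, coef u * bracket S (toRel u) s := by
  have hch : ∀ t, ∃ c : (X → X → Bool) → S, t ∈ WS → ∀ s : X → X → Prop, IsPartialOrder X s →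
      (if CExt s t then (1 : S) else 0) = ∑ u ∈ WS, c u * bracket S (toRel u) s := by
    intro t
    by_cases ht : t ∈ WS
    · obtain ⟨c, hc⟩ := st_inv S (nsCard t) t (WS_weak ht) rfl
      exact ⟨c, fun _ => hc⟩
    · exact ⟨fun _ => 0, fun h => absurd h ht⟩
  choose g hg using hch
  refine ⟨fun u => ∑ t ∈ WS, (if CExt r t then eps S t else 0) * g t u, ?_⟩
  intro s hs
  rw [master S hr hs]
  calc ∑ t ∈ WS.filter (fun t => CExt r t ∧ CExt s t), eps S t
      = ∑ t ∈ WS, (if CExt r t ∧ CExt s t then eps S t else 0) := Finset.sum_filter _ _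
    _ = ∑ t ∈ WS, (if CExt r t then eps S t else 0) * (if CExt s t then (1 : S) else 0) := by
        refine Finset.sum_congr rfl (fun t _ => ?_)
        by_cases h1 : CExt r t <;> by_cases h2 : CExt s t <;> simp [h1, h2]
    _ = ∑ t ∈ WS, (if CExt r t then eps S t else 0)
          * ∑ u ∈ WS, g t u * bracket S (toRel u) s := by
        refine Finset.sum_congr rfl (fun t ht => ?_)
        rw [← hg t ht s hs]
    _ = ∑ t ∈ WS, ∑ u ∈ WS,
          ((if CExt r t then eps S t else 0) * g t u) * bracket S (toRel u) s := by
        refine Finset.sum_congr rfl (fun t _ => ?_)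
        rw [Finset.mul_sum]
        exact Finset.sum_congr rfl (fun u _ => by ring)
    _ = ∑ u ∈ WS, ∑ t ∈ WS,
          ((if CExt r t then eps S t else 0) * g t u) * bracket S (toRel u) s :=
        Finset.sum_comm
    _ = ∑ u ∈ WS, (∑ t ∈ WS, (if CExt r t then eps S t else 0) * g t u)
          * bracket S (toRel u) s := by
        refine Finset.sum_congr rfl (fun u _ => ?_)
        rw [Finset.sum_mul]

theorem gen_fin (S : Type*) [CommRing S] {r : X → X → Prop} (hr : IsPartialOrder X r) :
    ∃ (n : ℕ) (w : Fin n → (X → X → Prop)) (lam : Fin n → S),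
      (∀ i, IsWeakTotalOrder X (w i)) ∧
      ∀ s : X → X → Prop, IsPartialOrder X s →
        bracket S r s = ∑ i, lam i * bracket S (w i) s := by
  obtain ⟨coef, hcoef⟩ := generation S hr
  refine ⟨WS.card, fun i => toRel ((WS.equivFin.symm i : {u : X → X → Bool // u ∈ WS}) : X → X → Bool),
    fun i => coef ((WS.equivFin.symm i : {u : X → X → Bool // u ∈ WS}) : X → X → Bool),
    fun i => toRel_wto (WS_weak (WS.equivFin.symm i).2), ?_⟩
  intro s hs
  rw [hcoef s hs, ← Finset.sum_coe_sort WS (fun u => coef u * bracket S (toRel u) s)]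
  exact (Equiv.sum_comp WS.equivFin.symm
    (fun u : {x : X → X → Bool // x ∈ WS} =>
      coef (u : X → X → Bool) * bracket S (toRel (u : X → X → Bool)) s)).symm

theorem indep_zero (S : Type*) [CommRing S] {ι : Type} [Fintype ι] (w : ι → (X → X → Prop))
    (hinj : Function.Injective w) (hweak : ∀ i, IsWeakTotalOrder X (w i)) (c : ι → S)
    (hc : ∀ s : X → X → Prop, IsPartialOrder X s → ∑ i, c i * bracket S (w i) s = 0) :
    ∀ i, c i = 0 := by
  classical
  set d : (X → X → Bool) → S := fun t => ∑ i, c i * (if CExt (w i) t then (1 : S) else 0)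
    with hd
  have hd0 : ∀ (m : ℕ) (t : X → X → Bool), t ∈ WS → nsCard t = m → d t = 0 := by
    intro m
    induction m using Nat.strong_induction_on with
    | _ m IH =>
      intro t htW hm
      have hwt : IsWeakB t := WS_weak htW
      set F : Finset (X → X → Bool) := WS.filter (fun u => CExt (toRel t) u ∧ u ≠ t) with hF
      have htninF : t ∉ F := by
        rw [hF, Finset.mem_filter]
        rintro ⟨-, -, hne⟩
        exact hne rfl
      have hins : WS.filter (fun u => CExt (toRel t) u) = insert t F := by
        ext u
        rw [hF]
        simp only [Finset.mem_insert, Finset.mem_filter]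
        constructor
        · rintro ⟨hWu, hcu⟩
          by_cases h : u = t
          · exact Or.inl h
          · exact Or.inr ⟨hWu, hcu, h⟩
        · rintro (rfl | ⟨hWu, hcu, -⟩)
          · exact ⟨htW, cext_toRel_self hwt⟩
          · exact ⟨hWu, hcu⟩
      have hkey : ∑ u ∈ insert t F, eps S u * d u = 0 := by
        calc ∑ u ∈ insert t F, eps S u * d u
            = ∑ u ∈ WS, (if CExt (toRel t) u then eps S u * d u else 0) := by
              rw [← Finset.sum_filter, hins]
          _ = ∑ u ∈ WS, ∑ i, c i * (if CExt (w i) u ∧ CExt (toRel t) u then eps S u else 0) := by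
              refine Finset.sum_congr rfl (fun u _ => ?_)
              by_cases hcu : CExt (toRel t) u
              · rw [if_pos hcu]
                simp only [hd]
                rw [Finset.mul_sum]
                refine Finset.sum_congr rfl (fun i _ => ?_)
                by_cases h2 : CExt (w i) u <;> simp [h2, hcu] <;> ring
              · rw [if_neg hcu]
                symm
                refine Finset.sum_eq_zero (fun i _ => ?_)
                simp [hcu]
          _ = ∑ i, ∑ u ∈ WS, c i * (if CExt (w i) u ∧ CExt (toRel t) u then eps S u else 0) :=
              Finset.sum_comm
          _ = ∑ i, c i * bracket S (w i) (toRel t) := by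
              refine Finset.sum_congr rfl (fun i _ => ?_)
              rw [master S (hweak i).1 (toRel_po hwt), Finset.sum_filter, Finset.mul_sum]
          _ = 0 := hc (toRel t) (toRel_po hwt)
      rw [Finset.sum_insert htninF] at hkey
      have hFzero : ∀ u ∈ F, eps S u * d u = 0 := by
        intro u hu
        rw [hF, Finset.mem_filter] at hu
        rw [IH (nsCard u) (hm ▸ nsCard_lt hwt (WS_weak hu.1) hu.2.1 hu.2.2) u hu.1 rfl,
          mul_zero]
      rw [Finset.sum_eq_zero hFzero, add_zero] at hkey
      have h2 : eps S t * (eps S t * d t) = 0 := by rw [hkey, mul_zero]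
      rwa [← mul_assoc, eps_sq, one_mul] at h2
  have hmain : ∀ (m : ℕ) (i : ι),
      ((univ : Finset (X × X)).filter fun p => w i p.1 p.2 ∧ p.1 ≠ p.2).card = m → c i = 0 := by
    intro m
    induction m using Nat.strong_induction_on with
    | _ m IH =>
      intro i hm
      set t : X → X → Bool := fun a b => decide (w i a b) with ht
      have hwt : IsWeakB t := wto_toB (hweak i)
      have hcself : CExt (w i) t := by
        rw [cext_poset_iff (hweak i).1]
        intro a b hab hne
        exact ⟨decide_eq_true hab, hne⟩
      have hdt : d t = 0 := hd0 (nsCard t) t (t_mem_WS hwt) rfl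
      simp only [hd] at hdt
      rw [Finset.sum_eq_single i] at hdt
      · rwa [if_pos hcself, mul_one] at hdt
      · intro j _ hji
        by_cases hcx : CExt (w j) t
        · have hwj : w j ≠ w i := fun h => hji (hinj h)
          have hsub : ((univ : Finset (X × X)).filter fun p => w j p.1 p.2 ∧ p.1 ≠ p.2)
              ⊆ ((univ : Finset (X × X)).filter fun p => w i p.1 p.2 ∧ p.1 ≠ p.2) := by
            apply Finset.monotone_filter_right
            rintro p _ ⟨h1, h2⟩
            have h3 := (cext_poset_iff (hweak j).1 t).1 hcx p.1 p.2 h1 h2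
            exact ⟨of_decide_eq_true h3.1, h2⟩
          have hlt : ((univ : Finset (X × X)).filter
              fun p => w j p.1 p.2 ∧ p.1 ≠ p.2).card < m := by
            rw [← hm]
            apply Finset.card_lt_card
            rw [Finset.ssubset_iff_of_subset hsub]
            by_contra hno
            push_neg at hno
            apply hwj
            have hiff : ∀ a b, (w j a b ∧ a ≠ b) ↔ (w i a b ∧ a ≠ b) := by
              intro a b
              constructor
              · intro hp
                have h4 := hsub (Finset.mem_filter.2 ⟨Finset.mem_univ (a, b), hp⟩)
                exact (Finset.mem_filter.1 h4).2
              · intro hp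
                have h4 := hno (a, b) (Finset.mem_filter.2 ⟨Finset.mem_univ (a, b), hp⟩)
                exact (Finset.mem_filter.1 h4).2
            funext a b
            apply propext
            by_cases hne : a = b
            · subst hne
              exact iff_of_true ((hweak j).1.refl a) ((hweak i).1.refl a)
            · constructor
              · intro h1; exact ((hiff a b).1 ⟨h1, hne⟩).1
              · intro h1; exact ((hiff a b).2 ⟨h1, hne⟩).1
          rw [IH _ hlt j rfl, zero_mul]
        · rw [if_neg hcx, mul_zero]
      · intro hni
        exact absurd (Finset.mem_univ i) hni
  intro i
  exact hmain _ i rfl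

end invsec

end fin

end PF

theorem stmt16 {X : Type*} [Finite X] {S : Type*} [CommRing S] [CharZero S]
    (hinv : ∀ n : ℕ, n ≠ 0 → IsUnit (n : S)) :
    -- generation: every partial order is observationally equivalent to a
    -- linear combination of weak total orders
    (∀ r : X → X → Prop, IsPartialOrder X r →
      ∃ (n : ℕ) (w : Fin n → (X → X → Prop)) (lam : Fin n → S),
        (∀ i, IsWeakTotalOrder X (w i)) ∧
        ∀ s : X → X → Prop, IsPartialOrder X s →
          bracket S r s = ∑ i, lam i * bracket S (w i) s) ∧
    -- linear independence of weak total orders modulo the kernel of the pairing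
    (∀ (ι : Type) [Fintype ι] (w : ι → (X → X → Prop)), Function.Injective w →
      (∀ i, IsWeakTotalOrder X (w i)) → ∀ lam mu : ι → S,
      (∀ s : X → X → Prop, IsPartialOrder X s →
        ∑ i, lam i * bracket S (w i) s = ∑ i, mu i * bracket S (w i) s) →
      lam = mu) := by
  haveI : Fintype X := Fintype.ofFinite X
  haveI : DecidableEq X := Classical.decEq X
  constructor
  · intro r hr
    exact PF.gen_fin S hr
  · intro ι _ w hinj hweak lam mu hEq
    have hzero : ∀ s : X → X → Prop, IsPartialOrder X s →
        ∑ i, (lam i - mu i) * bracket S (w i) s = 0 := by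
      intro s hs
      simp only [sub_mul]
      rw [Finset.sum_sub_distrib, hEq s hs, sub_self]
    have hz := PF.indep_zero S w hinj hweak (fun i => lam i - mu i) hzero
    funext i
    exact sub_eq_zero.1 (hz i)
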